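/- Let n and t be integers with 3t ≥ 2(n − 1) and t ≤ n − 3, and let k₊ ≥ 2 be an integer. Then there is no lattice Λ ⊆ ℤⁿ (additive subgroup of ℤⁿ) such that the error-ball B(n,t,k₊,0) tiles ℤⁿ by Λ. -/

import Mathlib

open Finset

/-- Hamming weight of an integer vector: the number of nonzero entries. -/
def wt {n : ℕ} (x : Fin n → ℤ) : ℕ := (Finset.univ.filter (fun i => x i ≠ 0)).card

/-- The `(n,t,k₊,k₋)`-error-ball in `ℤⁿ`. -/
def errBall (n t : ℕ) (kp km : ℤ) : Set (Fin n → ℤ) :=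
  {x | (∀ i, -km ≤ x i ∧ x i ≤ kp) ∧ wt x ≤ t}

/-- `Tiles B T` : every `z ∈ ℤⁿ` is uniquely `z = v + b` with `v ∈ T` and `b ∈ B`. -/
def Tiles {n : ℕ} (B T : Set (Fin n → ℤ)) : Prop :=
  ∀ z : Fin n → ℤ, ∃! p : (Fin n → ℤ) × (Fin n → ℤ),
    p.1 ∈ T ∧ p.2 ∈ B ∧ z = p.1 + p.2

def ind {n : ℕ} (S : Finset (Fin n)) : Fin n → ℤ := fun i => if i ∈ S then 1 else 0
lemma wt_le_card {n : ℕ} {x : Fin n → ℤ} {A : Finset (Fin n)}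
    (h : ∀ i, x i ≠ 0 → i ∈ A) : wt x ≤ A.card :=
  Finset.card_le_card (fun i hi => h i (Finset.mem_filter.mp hi).2)
lemma wt_mono {n : ℕ} {x y : Fin n → ℤ} (h : ∀ i, x i ≠ 0 → y i ≠ 0) : wt x ≤ wt y :=
  Finset.card_le_card (fun i hi =>
    Finset.mem_filter.mpr ⟨Finset.mem_univ i, h i (Finset.mem_filter.mp hi).2⟩)
lemma wt_ind {n : ℕ} (S : Finset (Fin n)) : wt (ind S) = S.card := by
  unfold wt ind; congr 1; ext i; by_cases h : i ∈ S <;> simp [h]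
lemma mem_errBall {n t : ℕ} {kp : ℤ} {x : Fin n → ℤ}
    (h1 : ∀ i, 0 ≤ x i) (h2 : ∀ i, x i ≤ kp) (h3 : wt x ≤ t) :
    x ∈ errBall n t kp 0 :=
  ⟨fun i => ⟨by simpa using h1 i, h2 i⟩, h3⟩

theorem stmt_12 (n t : ℕ) (kp : ℤ) (ht1 : 2 * n ≤ 3 * t + 2) (ht2 : t + 3 ≤ n)
    (hkp : 2 ≤ kp) :
    ¬ ∃ Λ : AddSubgroup (Fin n → ℤ),
      Tiles (errBall n t kp 0) (Λ : Set (Fin n → ℤ)) := by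
  rintro ⟨Λ, hT⟩
  classical
  set mc := n - (t + 1) with hmcdef
  set sg := 2 * t + 2 - n with hsgdef
  have huniq : ∀ b₁ b₂ : Fin n → ℤ, b₁ ∈ errBall n t kp 0 → b₂ ∈ errBall n t kp 0 →
      b₁ - b₂ ∈ Λ → b₁ = b₂ := by
    intro b₁ b₂ h1 h2 hmem
    obtain ⟨p, -, hup⟩ := hT b₁
    have e1 : ((0 : Fin n → ℤ), b₁) = p := hup _ ⟨Λ.zero_mem, h1, by simp⟩
    have e2 : (b₁ - b₂, b₂) = p := hup _ ⟨hmem, h2, by ring⟩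
    have h := e2.trans e1.symm
    have h1' : b₁ - b₂ = 0 := congrArg Prod.fst h
    exact sub_eq_zero.mp h1'
  have hex : ∀ z : Fin n → ℤ, ∃ b, b ∈ errBall n t kp 0 ∧ z - b ∈ Λ := by
    intro z
    obtain ⟨p, ⟨hp1, hp2, hz⟩, -⟩ := hT z
    refine ⟨p.2, hp2, ?_⟩
    rw [hz]
    simpa using hp1
  choose r hrB hrΛ using hex
  have hr0 : ∀ z i, 0 ≤ r z i := fun z i => by
    have h := (hrB z).1 i
    simpa using h.1
  have hrkp : ∀ z i, r z i ≤ kp := fun z i => ((hrB z).1 i).2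
  have hrwt : ∀ z, wt (r z) ≤ t := fun z => (hrB z).2
  -- Step 1: the representative of an indicator vector of a (t+1)-set vanishes on the set
  have step1 : ∀ S : Finset (Fin n), S.card = t + 1 → ∀ i ∈ S, r (ind S) i = 0 := by
    intro S hS i hi
    by_contra hne
    have hb1 : (1:ℤ) ≤ r (ind S) i := by have := hr0 (ind S) i; omega
    have hbe : (fun l => r (ind S) l - ind {i} l) ∈ errBall n t kp 0 := by
      refine mem_errBall (fun l => ?_) (fun l => ?_) ?_
      · rcases eq_or_ne l i with rfl | h
        · simp only [ind, Finset.mem_singleton, if_pos rfl]; omega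
        · simpa [ind, h] using hr0 (ind S) l
      · rcases eq_or_ne l i with rfl | h
        · have := hrkp (ind S) l
          simp only [ind, Finset.mem_singleton, if_pos rfl]; omega
        · simpa [ind, h] using hrkp (ind S) l
      · refine le_trans (wt_mono (y := r (ind S)) ?_) (hrwt _)
        intro l hl
        rcases eq_or_ne l i with rfl | h
        · omega
        · simpa [ind, h] using hl
    have hSe : (fun l => ind S l - ind {i} l) ∈ errBall n t kp 0 := by
      refine mem_errBall (fun l => ?_) (fun l => ?_) ?_
      · rcases eq_or_ne l i with rfl | h
        · simp [ind, hi]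
        · simp only [ind, Finset.mem_singleton, if_neg h]
          by_cases hl : l ∈ S <;> simp [hl]
      · rcases eq_or_ne l i with rfl | h
        · simp [ind, hi]; omega
        · simp only [ind, Finset.mem_singleton, if_neg h]
          by_cases hl : l ∈ S <;> simp [hl] <;> omega
      · refine le_trans (wt_le_card (A := S.erase i) ?_) ?_
        · intro l hl
          rcases eq_or_ne l i with rfl | h
          · simp [ind, hi] at hl
          · refine Finset.mem_erase.mpr ⟨h, ?_⟩
            by_contra hlS
            simp [ind, h, hlS] at hl
        · rw [Finset.card_erase_of_mem hi, hS]
          omega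
    have hcong : (fun l => r (ind S) l - ind {i} l) - (fun l => ind S l - ind {i} l) ∈ Λ := by
      have he : (fun l => r (ind S) l - ind {i} l) - (fun l => ind S l - ind {i} l)
          = -(ind S - r (ind S)) := by
        funext l
        simp only [Pi.sub_apply, Pi.neg_apply]
        ring
      rw [he]
      exact Λ.neg_mem (hrΛ _)
    have heq := huniq _ _ hbe hSe hcong
    have hfun : r (ind S) = ind S := by
      funext l
      have := congrFun heq l
      omega
    have hw : wt (r (ind S)) = t + 1 := by rw [hfun, wt_ind, hS]
    have := hrwt (ind S)
    omega
  
  -- Step 2: well-definedness of gamma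
  have step2 : ∀ (l : Fin n) (S S' : Finset (Fin n)), S.card = t + 1 → S'.card = t + 1 →
      l ∉ S → l ∉ S' → r (ind S) l = r (ind S') l := by
    intro l S S' hS hS' hlS hlS'
    have hinter : sg ≤ (S ∩ S').card := by
      have h1 := Finset.card_inter_add_card_union S S'
      have h2 := Finset.card_le_univ (S ∪ S')
      rw [Fintype.card_fin] at h2
      omega
    obtain ⟨C, hCsub, hCcard⟩ := Finset.exists_subset_card_eq hinter
    have key : ∀ S₀ : Finset (Fin n), S₀.card = t + 1 → C ⊆ S₀ →
        (r (ind S₀) + r (ind (C ∪ S₀ᶜ))) ∈ errBall n t kp 0 ∧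
        ((fun x => 1 + ind C x) - (r (ind S₀) + r (ind (C ∪ S₀ᶜ)))) ∈ Λ ∧
        ∀ x ∉ S₀, (r (ind S₀) + r (ind (C ∪ S₀ᶜ))) x = r (ind S₀) x := by
      intro S₀ hS₀ hCS₀
      have hdisj : Disjoint C S₀ᶜ := Disjoint.mono_left hCS₀ disjoint_compl_right
      have hS₂card : (C ∪ S₀ᶜ).card = t + 1 := by
        rw [Finset.card_union_of_disjoint hdisj, Finset.card_compl, Fintype.card_fin, hS₀, hCcard]
        omega
      have hz2 : ∀ x ∉ S₀, r (ind (C ∪ S₀ᶜ)) x = 0 := fun x hx =>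
        step1 _ hS₂card x (Finset.mem_union_right _ (Finset.mem_compl.mpr hx))
      have hz2' : ∀ x ∈ C, r (ind (C ∪ S₀ᶜ)) x = 0 := fun x hx =>
        step1 _ hS₂card x (Finset.mem_union_left _ hx)
      refine ⟨mem_errBall (fun x => ?_) (fun x => ?_) ?_, ?_, fun x hx => ?_⟩
      · exact add_nonneg (hr0 _ x) (hr0 _ x)
      · by_cases hx : x ∈ S₀
        · have h0 : r (ind S₀) x = 0 := step1 S₀ hS₀ x hx
          have := hrkp (ind (C ∪ S₀ᶜ)) x
          simp only [Pi.add_apply, h0]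
          omega
        · have := hrkp (ind S₀) x
          simp only [Pi.add_apply, hz2 x hx]
          omega
      · refine le_trans (wt_le_card (A := S₀ᶜ ∪ (S₀ \ C)) ?_) ?_
        · intro x hx
          by_contra hxA
          simp only [Finset.mem_union, Finset.mem_compl, Finset.mem_sdiff, not_or, not_and,
            not_not] at hxA
          obtain ⟨hx1, hx2⟩ := hxA
          have hxC : x ∈ C := hx2 hx1
          apply hx
          show r (ind S₀) x + r (ind (C ∪ S₀ᶜ)) x = 0
          rw [step1 S₀ hS₀ x hx1, hz2' x hxC]
          norm_num
        · have h1 := Finset.card_union_le S₀ᶜ (S₀ \ C)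
          have h2 : (S₀ \ C).card = S₀.card - C.card := Finset.card_sdiff_of_subset hCS₀
          have h3 : S₀ᶜ.card = n - S₀.card := by rw [Finset.card_compl, Fintype.card_fin]
          omega
      · have hXeq : (fun x => (1:ℤ) + ind C x) = ind S₀ + ind (C ∪ S₀ᶜ) := by
          funext x
          simp only [Pi.add_apply, ind, Finset.mem_union, Finset.mem_compl]
          by_cases hxC : x ∈ C
          · have hxS₀ : x ∈ S₀ := hCS₀ hxC
            simp [hxC, hxS₀]
          · by_cases hxS₀ : x ∈ S₀ <;> simp [hxC, hxS₀]
        have he : (fun x => (1:ℤ) + ind C x) - (r (ind S₀) + r (ind (C ∪ S₀ᶜ))) =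
            (ind S₀ - r (ind S₀)) + (ind (C ∪ S₀ᶜ) - r (ind (C ∪ S₀ᶜ))) := by
          rw [hXeq]; ring
        rw [he]
        exact Λ.add_mem (hrΛ _) (hrΛ _)
      · simp only [Pi.add_apply, hz2 x hx, add_zero]
    obtain ⟨hwB, hwΛ, hwev⟩ := key S hS (hCsub.trans Finset.inter_subset_left)
    obtain ⟨hwB', hwΛ', hwev'⟩ := key S' hS' (hCsub.trans Finset.inter_subset_right)
    have hdiff : (r (ind S) + r (ind (C ∪ Sᶜ))) - (r (ind S') + r (ind (C ∪ S'ᶜ))) ∈ Λ := by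
      have h := Λ.sub_mem hwΛ' hwΛ
      have e : ((fun x => (1:ℤ) + ind C x) - (r (ind S') + r (ind (C ∪ S'ᶜ))))
          - ((fun x => (1:ℤ) + ind C x) - (r (ind S) + r (ind (C ∪ Sᶜ))))
          = (r (ind S) + r (ind (C ∪ Sᶜ))) - (r (ind S') + r (ind (C ∪ S'ᶜ))) := by
        ring
      rwa [e] at h
    have heq := huniq _ _ hwB hwB' hdiff
    have := congrFun heq l
    rwa [hwev l hlS, hwev' l hlS'] at this
  
  -- gamma
  have hSl : ∀ l : Fin n, ∃ S : Finset (Fin n), S.card = t + 1 ∧ l ∉ S := by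
    intro l
    have hcard : t + 1 ≤ (Finset.univ.erase l).card := by
      rw [Finset.card_erase_of_mem (Finset.mem_univ l), Finset.card_univ, Fintype.card_fin]
      omega
    obtain ⟨S, hsub, hcard'⟩ := Finset.exists_subset_card_eq hcard
    exact ⟨S, hcard', fun h => (Finset.mem_erase.mp (hsub h)).1 rfl⟩
  choose Sl hSlcard hSlmem using hSl
  set γ : Fin n → ℤ := fun l => r (ind (Sl l)) l with hγdef
  have γ_spec : ∀ (l : Fin n) (S : Finset (Fin n)), S.card = t + 1 → l ∉ S →
      r (ind S) l = γ l :=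
    fun l S hS hl => step2 l S (Sl l) hS (hSlcard l) hl (hSlmem l)
  have γ0 : ∀ l, 0 ≤ γ l := fun l => hr0 _ l
  have γkp : ∀ l, γ l ≤ kp := fun l => hrkp _ l
  -- a (t+1)-set containing i but not j
  have hpick : ∀ i j : Fin n, i ≠ j → ∃ S : Finset (Fin n), S.card = t + 1 ∧ i ∈ S ∧ j ∉ S := by
    intro i j hij
    have hmemi : i ∈ Finset.univ.erase j := Finset.mem_erase.mpr ⟨hij, Finset.mem_univ i⟩
    have hcard : t ≤ ((Finset.univ.erase j).erase i).card := by
      rw [Finset.card_erase_of_mem hmemi, Finset.card_erase_of_mem (Finset.mem_univ j),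
        Finset.card_univ, Fintype.card_fin]
      omega
    obtain ⟨A, hsub, hA⟩ := Finset.exists_subset_card_eq hcard
    have hiA : i ∉ A := fun h => (Finset.mem_erase.mp (hsub h)).1 rfl
    refine ⟨insert i A, ?_, Finset.mem_insert_self i A, ?_⟩
    · rw [Finset.card_insert_of_notMem hiA, hA]
    · intro h
      rcases Finset.mem_insert.mp h with h | h
      · exact hij h.symm
      · exact (Finset.mem_erase.mp (Finset.mem_erase.mp (hsub h)).2).1 rfl
  -- swap vectors belong to the lattice
  have swap : ∀ i j : Fin n, i ≠ j →
      ((fun l => if l = i then 1 + γ i else 0) - fun l => if l = j then 1 + γ j else 0) ∈ Λ := by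
    intro i j hij
    obtain ⟨S, hS, hiS, hjS⟩ := hpick i j hij
    set S' : Finset (Fin n) := insert j (S.erase i) with hS'def
    have hjSe : j ∉ S.erase i := fun h => hjS (Finset.mem_erase.mp h).2
    have hS'card : S'.card = t + 1 := by
      rw [hS'def, Finset.card_insert_of_notMem hjSe, Finset.card_erase_of_mem hiS, hS]
      omega
    have hiS' : i ∉ S' := by
      rw [hS'def]
      intro h
      rcases Finset.mem_insert.mp h with h | h
      · exact hij h
      · exact (Finset.mem_erase.mp h).1 rfl
    have hjS' : j ∈ S' := Finset.mem_insert_self j _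
    have hmem : (ind S - r (ind S)) - (ind S' - r (ind S')) ∈ Λ := Λ.sub_mem (hrΛ _) (hrΛ _)
    have heq : (ind S - r (ind S)) - (ind S' - r (ind S')) =
        ((fun l => if l = i then 1 + γ i else 0) - fun l => if l = j then 1 + γ j else 0) := by
      funext l
      simp only [Pi.sub_apply]
      rcases eq_or_ne l i with rfl | hli
      · rw [step1 S hS l hiS, γ_spec l S' hS'card hiS']
        simp [ind, hiS, hiS', hij]
      · rcases eq_or_ne l j with rfl | hlj
        · rw [step1 S' hS'card l hjS', γ_spec l S hS hjS]
          simp [ind, hjS, hjS', hli]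
          ring
        · have hmemiff : l ∈ S' ↔ l ∈ S := by
            rw [hS'def]
            simp only [Finset.mem_insert, Finset.mem_erase]
            constructor
            · rintro (h | h)
              · exact absurd h hlj
              · exact h.2
            · intro h
              exact Or.inr ⟨hli, h⟩
          by_cases hlS : l ∈ S
          · rw [step1 S hS l hlS, step1 S' hS'card l (hmemiff.mpr hlS)]
            simp [ind, hlS, hmemiff.mpr hlS, hli, hlj]
          · have hlS' : l ∉ S' := fun h => hlS (hmemiff.mp h)
            rw [γ_spec l S hS hlS, γ_spec l S' hS'card hlS']
            simp [ind, hlS, hlS', hli, hlj]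
    rwa [heq] at hmem
  -- at most one coordinate with gamma < kp
  have hγkp2 : ∀ i j : Fin n, i ≠ j → γ i = kp ∨ γ j = kp := by
    intro i j hij
    by_contra hcon
    push_neg at hcon
    obtain ⟨hi, hj⟩ := hcon
    have hik : γ i ≤ kp - 1 := by have := γkp i; omega
    have hjk : γ j ≤ kp - 1 := by have := γkp j; omega
    have hb1 : (fun l => if l = i then 1 + γ i else 0) ∈ errBall n t kp 0 := by
      refine mem_errBall (fun l => ?_) (fun l => ?_) ?_
      · rcases eq_or_ne l i with rfl | h
        · have := γ0 l; simp only [if_pos rfl]; omega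
        · simp [h]
      · rcases eq_or_ne l i with rfl | h
        · simp only [if_pos rfl]; omega
        · simp only [if_neg h]; omega
      · refine le_trans (wt_le_card (A := {i}) ?_) ?_
        · intro x hx
          simp only [Finset.mem_singleton]
          by_contra h
          exact hx (if_neg h)
        · simp only [Finset.card_singleton]
          omega
    have hb2 : (fun l => if l = j then 1 + γ j else 0) ∈ errBall n t kp 0 := by
      refine mem_errBall (fun l => ?_) (fun l => ?_) ?_
      · rcases eq_or_ne l j with rfl | h
        · have := γ0 l; simp only [if_pos rfl]; omega
        · simp [h]
      · rcases eq_or_ne l j with rfl | h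
        · simp only [if_pos rfl]; omega
        · simp only [if_neg h]; omega
      · refine le_trans (wt_le_card (A := {j}) ?_) ?_
        · intro x hx
          simp only [Finset.mem_singleton]
          by_contra h
          exact hx (if_neg h)
        · simp only [Finset.card_singleton]
          omega
    have heq := huniq _ _ hb1 hb2 (swap i j hij)
    have hci := congrFun heq i
    have hci2 : 1 + γ i = 0 := by
      rw [if_pos rfl, if_neg hij] at hci
      exact hci
    have := γ0 i
    omega
  
  -- an sg-set C outside of which gamma is kp
  obtain ⟨C, hCcard, hCall⟩ : ∃ C : Finset (Fin n), C.card = sg ∧ ∀ l ∉ C, γ l = kp := by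
    by_cases hall : ∀ l, γ l = kp
    · have hsgn : sg ≤ (Finset.univ : Finset (Fin n)).card := by
        rw [Finset.card_univ, Fintype.card_fin]
        omega
      obtain ⟨C, -, hC⟩ := Finset.exists_subset_card_eq hsgn
      exact ⟨C, hC, fun l _ => hall l⟩
    · push_neg at hall
      obtain ⟨l₀, hl₀⟩ := hall
      have hcard : sg - 1 ≤ (Finset.univ.erase l₀).card := by
        rw [Finset.card_erase_of_mem (Finset.mem_univ l₀), Finset.card_univ, Fintype.card_fin]
        omega
      obtain ⟨D, hDsub, hDcard⟩ := Finset.exists_subset_card_eq hcard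
      have hl₀D : l₀ ∉ D := fun h => (Finset.mem_erase.mp (hDsub h)).1 rfl
      refine ⟨insert l₀ D, ?_, ?_⟩
      · rw [Finset.card_insert_of_notMem hl₀D, hDcard]
        omega
      · intro l hl
        have hne : l ≠ l₀ := fun h => hl (h ▸ Finset.mem_insert_self l₀ D)
        rcases hγkp2 l l₀ hne with h | h
        · exact h
        · exact absurd h hl₀
  -- partition of the complement of C
  have hCcompl : Cᶜ.card = 2 * mc := by
    rw [Finset.card_compl, Fintype.card_fin, hCcard]
    omega
  obtain ⟨P, hPsub, hPcard⟩ := Finset.exists_subset_card_eq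
    (show mc ≤ Cᶜ.card by omega)
  set Q : Finset (Fin n) := Cᶜ \ P with hQdef
  have hQcard : Q.card = mc := by
    rw [hQdef, Finset.card_sdiff_of_subset hPsub, hCcompl, hPcard]
    omega
  have hScard : (Pᶜ).card = t + 1 := by
    rw [Finset.card_compl, Fintype.card_fin, hPcard]
    omega
  have hS'card : (Qᶜ).card = t + 1 := by
    rw [Finset.card_compl, Fintype.card_fin, hQcard]
    omega
  -- membership facts
  have hCS : ∀ l ∈ C, l ∈ Pᶜ := fun l hl =>
    Finset.mem_compl.mpr (fun hP => Finset.mem_compl.mp (hPsub hP) hl)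
  have hCS' : ∀ l ∈ C, l ∈ Qᶜ := fun l hl =>
    Finset.mem_compl.mpr (fun hQ => Finset.mem_compl.mp (Finset.mem_sdiff.mp hQ).1 hl)
  have hPS : ∀ l ∈ P, l ∉ Pᶜ := fun l hl => by simp [Finset.mem_compl, hl]
  have hPC : ∀ l ∈ P, l ∉ C := fun l hl => Finset.mem_compl.mp (hPsub hl)
  have hPS' : ∀ l ∈ P, l ∈ Qᶜ := fun l hl =>
    Finset.mem_compl.mpr (fun hQ => (Finset.mem_sdiff.mp hQ).2 hl)
  have hQS' : ∀ l ∈ Q, l ∉ Qᶜ := fun l hl => by simp [Finset.mem_compl, hl]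
  have hQC : ∀ l ∈ Q, l ∉ C := fun l hl => Finset.mem_compl.mp (Finset.mem_sdiff.mp hl).1
  have hQS : ∀ l ∈ Q, l ∈ Pᶜ := fun l hl =>
    Finset.mem_compl.mpr (Finset.mem_sdiff.mp hl).2
  have hcover : ∀ l : Fin n, l ∈ C ∨ l ∈ P ∨ l ∈ Q := by
    intro l
    by_cases hC : l ∈ C
    · exact Or.inl hC
    · by_cases hP : l ∈ P
      · exact Or.inr (Or.inl hP)
      · exact Or.inr (Or.inr (Finset.mem_sdiff.mpr ⟨Finset.mem_compl.mpr hC, hP⟩))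
  -- the two ball elements
  have hb1 : (fun l => if l ∈ C then (2:ℤ) else 0) ∈ errBall n t kp 0 := by
    refine mem_errBall (fun l => ?_) (fun l => ?_) ?_
    · by_cases h : l ∈ C <;> simp [h]
    · by_cases h : l ∈ C <;> simp [h] <;> omega
    · refine le_trans (wt_le_card (A := C) ?_) ?_
      · intro x hx
        by_contra h
        exact hx (if_neg h)
      · rw [hCcard]
        omega
  have hb2 : (fun l => if l ∈ C then 0 else kp - 1) ∈ errBall n t kp 0 := by
    refine mem_errBall (fun l => ?_) (fun l => ?_) ?_
    · by_cases h : l ∈ C <;> simp [h] <;> omega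
    · by_cases h : l ∈ C <;> simp [h] <;> omega
    · refine le_trans (wt_le_card (A := Cᶜ) ?_) ?_
      · intro x hx
        rw [Finset.mem_compl]
        intro h
        exact hx (if_pos h)
      · rw [hCcompl]
        omega
  have hδ : (ind Pᶜ - r (ind Pᶜ)) + (ind Qᶜ - r (ind Qᶜ)) ∈ Λ := Λ.add_mem (hrΛ _) (hrΛ _)
  have heq : ((fun l => if l ∈ C then (2:ℤ) else 0) - fun l => if l ∈ C then 0 else kp - 1) =
      (ind Pᶜ - r (ind Pᶜ)) + (ind Qᶜ - r (ind Qᶜ)) := by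
    funext l
    simp only [Pi.sub_apply, Pi.add_apply]
    rcases hcover l with hl | hl | hl
    · rw [step1 _ hScard l (hCS l hl), step1 _ hS'card l (hCS' l hl)]
      simp [ind, hCS l hl, hCS' l hl, hl]
    · have h1 : l ∉ C := hPC l hl
      have h2 : l ∉ Pᶜ := hPS l hl
      rw [γ_spec l Pᶜ hScard h2, step1 _ hS'card l (hPS' l hl), hCall l h1]
      simp [ind, h2, hPS' l hl, h1]
      ring
    · have h1 : l ∉ C := hQC l hl
      have h2 : l ∉ Qᶜ := hQS' l hl
      rw [γ_spec l Qᶜ hS'card h2, step1 _ hScard l (hQS l hl), hCall l h1]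
      simp [ind, h2, hQS l hl, h1]
      ring
  have hfin := huniq _ _ hb1 hb2 (heq ▸ hδ)
  have hCne : C.Nonempty := by
    rw [← Finset.card_pos, hCcard]
    omega
  obtain ⟨l₁, hl₁⟩ := hCne
  have := congrFun hfin l₁
  rw [if_pos hl₁, if_pos hl₁] at this
  norm_num at this
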